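/- arXiv:2012.05349 — 5 statements merged into one kernel-verified Lean document; each statement's English description precedes it below -/
import Mathlib

section
/- Let E_R ∈ ℝ^{n_x×n_x} and E_W ∈ ℝ^{n_p×n_p} be symmetric positive definite, and define the ellipsoidal level sets R(α) = {x ∈ ℝ^{n_x} : xᵀ E_R x ≤ α²} and W(σ) = {w ∈ ℝ^{n_p} : wᵀ E_W w ≤ σ²}. Suppose a_α ≥ 0 and a_σ ≥ 0 satisfy a_α + a_σ ≤ 1 and the 2×2 block matrix [[Aᵀ E_R A − a_α E_R, Aᵀ E_R B^w],[(B^w)ᵀ E_R A, (B^w)ᵀ E_R B^w − a_σ E_W]] is negative semidefinite. Then for all α_k ≥ 0, σ_k ≥ 0, and α_{k+1} ≥ 0 with α_{k+1}² ≥ a_α α_k² + a_σ σ_k², the containment A·R(α_k) + B^w·W(σ_k) ⊆ R(α_{k+1}) holds; in particular, for every σ ≥ 0, A·R(σ) + B^w·W(σ) ⊆ R(σ). -/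
open Matrix Set Pointwise Filter Topology

noncomputable def vnorm {n : Type*} [Fintype n] (v : n → ℝ) : ℝ :=
  Real.sqrt (∑ i, v i ^ 2)

noncomputable def sNorm {m n : Type*} [Fintype m] [Fintype n] (M : Matrix m n ℝ) : ℝ :=
  sSup ((fun v => vnorm (M.mulVec v)) '' {v | vnorm v ≤ 1})

/-- `specLe1 M` means the spectral (operator 2-)norm of `M` is at most 1. -/
def specLe1 {m n : Type*} [Fintype m] [Fintype n] (M : Matrix m n ℝ) : Prop :=
  ∀ v, vnorm (M.mulVec v) ≤ vnorm v

/-- Membership in the structured norm-bounded uncertainty set 𝔻: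
`Δ = diag(Δ₁,…,Δ_s)` with `‖Δᵢ‖₂ ≤ 1`. -/
def memD {s : ℕ} {np nq : Fin s → ℕ}
    (Δ : Matrix (Σ i, Fin (np i)) (Σ i, Fin (nq i)) ℝ) : Prop :=
  ∃ B : ∀ i, Matrix (Fin (np i)) (Fin (nq i)) ℝ,
    (∀ i, specLe1 (B i)) ∧ Δ = Matrix.blockDiagonal' B

/-- The `i`-th row block of a block-partitioned matrix. -/
def rowBlock {s : ℕ} {nq : Fin s → ℕ} {n : Type*}
    (M : Matrix (Σ i, Fin (nq i)) n ℝ) (i : Fin s) : Matrix (Fin (nq i)) n ℝ :=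
  Matrix.of fun j l => M ⟨i, j⟩ l

/-- The `i`-th block of a block-partitioned vector. -/
def vecBlock {s : ℕ} {np : Fin s → ℕ} (v : (Σ i, Fin (np i)) → ℝ) (i : Fin s) :
    Fin (np i) → ℝ := fun j => v ⟨i, j⟩


lemma quadHelper {m n k : ℕ} (A : Matrix (Fin m) (Fin n) ℝ) (M : Matrix (Fin m) (Fin m) ℝ)
    (B : Matrix (Fin m) (Fin k) ℝ) (x : Fin n → ℝ) (y : Fin k → ℝ) :
    x ⬝ᵥ (Aᵀ * M * B).mulVec y = (A.mulVec x) ⬝ᵥ M.mulVec (B.mulVec y) := by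
  rw [← Matrix.mulVec_mulVec, ← Matrix.mulVec_mulVec, Matrix.dotProduct_mulVec,
    Matrix.vecMul_transpose]

/-- the ellipsoidal level-set dynamics condition. -/
theorem stmt3 {nx np : ℕ}
    (A : Matrix (Fin nx) (Fin nx) ℝ) (Bw : Matrix (Fin nx) (Fin np) ℝ)
    (E_R : Matrix (Fin nx) (Fin nx) ℝ) (hER : E_R.PosDef)
    (E_W : Matrix (Fin np) (Fin np) ℝ) (hEW : E_W.PosDef)
    (aα aσ : ℝ) (haα : 0 ≤ aα) (haσ : 0 ≤ aσ) (hsum : aα + aσ ≤ 1)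
    (hLMI : (-(Matrix.fromBlocks (Aᵀ * E_R * A - aα • E_R) (Aᵀ * E_R * Bw)
        (Bwᵀ * E_R * A) (Bwᵀ * E_R * Bw - aσ • E_W))).PosSemidef) :
    (∀ αk σk αk1 : ℝ, 0 ≤ αk → 0 ≤ σk → 0 ≤ αk1 →
      aα * αk ^ 2 + aσ * σk ^ 2 ≤ αk1 ^ 2 →
      A.mulVec '' {x | x ⬝ᵥ E_R.mulVec x ≤ αk ^ 2} +
          Bw.mulVec '' {w | w ⬝ᵥ E_W.mulVec w ≤ σk ^ 2} ⊆
        {x | x ⬝ᵥ E_R.mulVec x ≤ αk1 ^ 2}) ∧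
    (∀ σ : ℝ, 0 ≤ σ →
      A.mulVec '' {x | x ⬝ᵥ E_R.mulVec x ≤ σ ^ 2} +
          Bw.mulVec '' {w | w ⬝ᵥ E_W.mulVec w ≤ σ ^ 2} ⊆
        {x | x ⬝ᵥ E_R.mulVec x ≤ σ ^ 2}) := by
  
  have key : ∀ (x : Fin nx → ℝ) (w : Fin np → ℝ),
      (A.mulVec x + Bw.mulVec w) ⬝ᵥ E_R.mulVec (A.mulVec x + Bw.mulVec w) ≤
        aα * (x ⬝ᵥ E_R.mulVec x) + aσ * (w ⬝ᵥ E_W.mulVec w) := by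
    intro x w
    have h0 := hLMI.dotProduct_mulVec_nonneg (Sum.elim x w)
    rw [Matrix.neg_mulVec, dotProduct_neg, le_neg, neg_zero,
      Matrix.fromBlocks_mulVec] at h0
    simp only [star_trivial, Sum.elim_comp_inl, Sum.elim_comp_inr] at h0
    rw [sumElim_dotProduct_sumElim] at h0
    simp only [dotProduct_add, Matrix.sub_mulVec, dotProduct_sub,
      Matrix.smul_mulVec, dotProduct_smul, quadHelper, smul_eq_mul] at h0
    simp only [Matrix.mulVec_add, dotProduct_add, add_dotProduct]
    nlinarith [h0]
  have main : ∀ αk σk αk1 : ℝ, 0 ≤ αk → 0 ≤ σk → 0 ≤ αk1 →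
      aα * αk ^ 2 + aσ * σk ^ 2 ≤ αk1 ^ 2 →
      A.mulVec '' {x | x ⬝ᵥ E_R.mulVec x ≤ αk ^ 2} +
          Bw.mulVec '' {w | w ⬝ᵥ E_W.mulVec w ≤ σk ^ 2} ⊆
        {x | x ⬝ᵥ E_R.mulVec x ≤ αk1 ^ 2} := by
    intro αk σk αk1 _ _ _ hle y hy
    obtain ⟨u, ⟨x, hx, rfl⟩, v, ⟨w, hw, rfl⟩, rfl⟩ := hy
    calc (A.mulVec x + Bw.mulVec w) ⬝ᵥ E_R.mulVec (A.mulVec x + Bw.mulVec w)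
        ≤ aα * (x ⬝ᵥ E_R.mulVec x) + aσ * (w ⬝ᵥ E_W.mulVec w) := key x w
      _ ≤ aα * αk ^ 2 + aσ * σk ^ 2 := by
          gcongr <;> [exact hx; exact hw]
      _ ≤ αk1 ^ 2 := hle
  refine ⟨main, fun σ hσ => ?_⟩
  refine main σ σ σ hσ hσ hσ ?_
  nlinarith [sq_nonneg σ]
end

section
/- Let E_R ∈ ℝ^{n_x×n_x} be symmetric positive definite and, for i = 1,…,s, let E_{W,i} ∈ ℝ^{n_pi×n_pi} be symmetric positive definite, with n_p = Σ_i n_pi. Write w ∈ ℝ^{n_p} in blocks w = (w_1,…,w_s) with w_i ∈ ℝ^{n_pi}, and define R(α) = {x ∈ ℝ^{n_x} : xᵀ E_R x ≤ α²} and, for σ ∈ ℝ^s with σ ≥ 0 componentwise, W(σ) = {w ∈ ℝ^{n_p} : w_iᵀ E_{W,i} w_i ≤ σ_i² for all i}. Suppose a_α ≥ 0 and a_{σ,1},…,a_{σ,s} ≥ 0 satisfy a_α + Σ_{i=1}^s a_{σ,i} ≤ 1 and the 2×2 block matrix [[Aᵀ E_R A − a_α E_R, Aᵀ E_R B^w],[(B^w)ᵀ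 E_R A, (B^w)ᵀ E_R B^w − D]] is negative semidefinite, where D = diag(a_{σ,1} E_{W,1},…,a_{σ,s} E_{W,s}). Then for all α_k ≥ 0, σ_k ∈ ℝ^s with σ_k ≥ 0, and α_{k+1} ≥ 0 with α_{k+1}² ≥ a_α α_k² + Σ_{i=1}^s a_{σ,i} (σ_k)_i², the containment A·R(α_k) + B^w·W(σ_k) ⊆ R(α_{k+1}) holds. -/
open Matrix Set Pointwise Filter Topology

lemma quad_blockDiagonal' {s : ℕ} {np : Fin s → ℕ}
    (B : ∀ i, Matrix (Fin (np i)) (Fin (np i)) ℝ) (w : (Σ i, Fin (np i)) → ℝ) :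
    w ⬝ᵥ (Matrix.blockDiagonal' B).mulVec w
      = ∑ i, vecBlock w i ⬝ᵥ (B i).mulVec (vecBlock w i) := by
  simp only [dotProduct, mulVec, vecBlock]
  rw [← Finset.univ_sigma_univ, Finset.sum_sigma]
  refine Finset.sum_congr rfl fun i _ => Finset.sum_congr rfl fun j _ => ?_
  congr 1
  rw [Finset.sum_sigma]
  rw [Finset.sum_eq_single i]
  · simp [dotProduct]
  · intro i' _ hne
    apply Finset.sum_eq_zero; intro j' _
    rw [Matrix.blockDiagonal'_apply_ne _ _ _ (Ne.symm hne), zero_mul]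
  · simp

/-- structured version of the ellipsoidal level-set dynamics condition,
with blockwise disturbance ellipsoids. -/
theorem stmt4 {nx s : ℕ} {np : Fin s → ℕ}
    (A : Matrix (Fin nx) (Fin nx) ℝ) (Bw : Matrix (Fin nx) (Σ i, Fin (np i)) ℝ)
    (E_R : Matrix (Fin nx) (Fin nx) ℝ) (hER : E_R.PosDef)
    (E_W : ∀ i, Matrix (Fin (np i)) (Fin (np i)) ℝ) (hEW : ∀ i, (E_W i).PosDef)
    (aα : ℝ) (aσ : Fin s → ℝ) (haα : 0 ≤ aα) (haσ : ∀ i, 0 ≤ aσ i)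
    (hsum : aα + ∑ i, aσ i ≤ 1)
    (hLMI : (-(Matrix.fromBlocks (Aᵀ * E_R * A - aα • E_R) (Aᵀ * E_R * Bw)
        (Bwᵀ * E_R * A)
        (Bwᵀ * E_R * Bw - Matrix.blockDiagonal' fun i => aσ i • E_W i))).PosSemidef) :
    ∀ (αk : ℝ) (σk : Fin s → ℝ) (αk1 : ℝ), 0 ≤ αk → (∀ i, 0 ≤ σk i) → 0 ≤ αk1 →
      aα * αk ^ 2 + ∑ i, aσ i * σk i ^ 2 ≤ αk1 ^ 2 →
      A.mulVec '' {x | x ⬝ᵥ E_R.mulVec x ≤ αk ^ 2} +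
          Bw.mulVec ''
            {w | ∀ i, vecBlock w i ⬝ᵥ (E_W i).mulVec (vecBlock w i) ≤ σk i ^ 2} ⊆
        {x | x ⬝ᵥ E_R.mulVec x ≤ αk1 ^ 2} := by
  intro αk σk αk1 hαk hσk hαk1 hbound y hy
  rw [Set.mem_add] at hy
  obtain ⟨u, hu, v, hv, rfl⟩ := hy
  obtain ⟨x, hx, rfl⟩ := hu
  obtain ⟨w, hw, rfl⟩ := hv
  have h2 := hLMI.dotProduct_mulVec_nonneg (Sum.elim x w)
  rw [Matrix.neg_mulVec, Matrix.fromBlocks_mulVec] at h2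
  simp only [star_trivial, Sum.elim_comp_inl, Sum.elim_comp_inr, dotProduct_neg,
    ← Sum.elim_neg_neg, sumElim_dotProduct_sumElim] at h2
  simp only [Matrix.sub_mulVec, Matrix.smul_mulVec, ← Matrix.mulVec_mulVec,
    dotProduct_add, dotProduct_sub, dotProduct_smul,
    Matrix.dotProduct_mulVec _ Aᵀ, Matrix.dotProduct_mulVec _ Bwᵀ,
    Matrix.vecMul_transpose] at h2
  rw [quad_blockDiagonal'] at h2
  simp only [smul_eq_mul] at h2
  have hW : ∑ i, vecBlock w i ⬝ᵥ ((aσ i • E_W i).mulVec (vecBlock w i)) ≤ ∑ i, aσ i * σk i ^ 2 := by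
    apply Finset.sum_le_sum; intro i _
    rw [Matrix.smul_mulVec, dotProduct_smul, smul_eq_mul]
    exact mul_le_mul_of_nonneg_left (hw i) (haσ i)
  have hX : aα * (x ⬝ᵥ E_R.mulVec x) ≤ aα * αk ^ 2 :=
    mul_le_mul_of_nonneg_left hx haα
  simp only [Set.mem_setOf_eq, Matrix.mulVec_add, dotProduct_add, add_dotProduct]
  linarith
end

section
/- Let K ∈ ℝ^{n_u×n_x} and set Ā = A − B^u K. Let E_R ∈ ℝ^{n_x×n_x} be symmetric positive definite, and for i = 1,…,s let E_{W,i} ∈ ℝ^{n_pi×n_pi} be symmetric positive definite and let C̄_i ∈ ℝ^{n_qi×n_x} (in the application C̄_i = E^x_{Y,i} − E^u_{Y,i} K). Define R(σ) = {x : xᵀ E_R x ≤ σ²}, Y(σ) = {x : xᵀ C̄_iᵀ C̄_i x ≤ σ² for all i}, and W(σ) = {w = (w_1,…,w_s) ∈ ℝ^{n_p} : w_iᵀ E_{W,i} w_i ≤ σ² for all i}. Suppose a_α ≥ 0 and a_{σ,1},…,a_{σ,s} ≥ 0 satisfy: (a) the block matrix [[−E_R, E_R Ā, E_R B^w],[Āᵀ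 E_R, −a_α E_R, 0],[(B^w)ᵀ E_R, 0, −D]] ⪯ 0 where D = diag(a_{σ,1} E_{W,1},…,a_{σ,s} E_{W,s}); (b) a_α + Σ_{i=1}^s a_{σ,i} ≤ 1; and (c) C̄_iᵀ C̄_i ⪯ E_R for all i. Then for every σ ≥ 0: (i) R(σ) ⊆ Y(σ), and (ii) Ā·R(σ) + B^w·W(σ) ⊆ R(σ); i.e., R(σ) is a robust positive invariant level set for the closed-loop system x_{k+1} = Ā x_k + B^w w_k with w_k ∈ W(σ). -/
open Matrix Set Pointwise Filter Topology

lemma mulVecBD {s : ℕ} {np : Fin s → ℕ} (D : ∀ i, Matrix (Fin (np i)) (Fin (np i)) ℝ)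
    (w : (Σ i, Fin (np i)) → ℝ) (i : Fin s) (j : Fin (np i)) :
    (Matrix.blockDiagonal' D).mulVec w ⟨i, j⟩ = (D i).mulVec (vecBlock w i) j := by
  rw [Matrix.mulVec, dotProduct, ← Finset.univ_sigma_univ, Finset.sum_sigma]
  rw [Finset.sum_eq_single i]
  · simp [Matrix.blockDiagonal'_apply, Matrix.mulVec, dotProduct, vecBlock]
  · intro k _ hk
    apply Finset.sum_eq_zero
    intro l _
    simp [Matrix.blockDiagonal'_apply, (Ne.symm hk)]
  · simp

lemma quadBD {s : ℕ} {np : Fin s → ℕ} (D : ∀ i, Matrix (Fin (np i)) (Fin (np i)) ℝ)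
    (w : (Σ i, Fin (np i)) → ℝ) :
    w ⬝ᵥ (Matrix.blockDiagonal' D).mulVec w
      = ∑ i, vecBlock w i ⬝ᵥ (D i).mulVec (vecBlock w i) := by
  rw [dotProduct, ← Finset.univ_sigma_univ, Finset.sum_sigma]
  refine Finset.sum_congr rfl fun i _ => ?_
  refine Finset.sum_congr rfl fun j _ => ?_
  rw [mulVecBD]
  rfl

/-- the minimal-RPI LMI conditions (a)–(c) imply that `R(σ)` is a
robust positive invariant level set for the closed loop `Ā = A − Bᵘ K`. -/
theorem stmt7 {nx nu s : ℕ} {np nq : Fin s → ℕ}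
    (A : Matrix (Fin nx) (Fin nx) ℝ) (Bu : Matrix (Fin nx) (Fin nu) ℝ)
    (Bw : Matrix (Fin nx) (Σ i, Fin (np i)) ℝ)
    (K : Matrix (Fin nu) (Fin nx) ℝ)
    (E_R : Matrix (Fin nx) (Fin nx) ℝ) (hER : E_R.PosDef)
    (E_W : ∀ i, Matrix (Fin (np i)) (Fin (np i)) ℝ) (hEW : ∀ i, (E_W i).PosDef)
    (Cb : ∀ i : Fin s, Matrix (Fin (nq i)) (Fin nx) ℝ)
    (aα : ℝ) (aσ : Fin s → ℝ) (haα : 0 ≤ aα) (haσ : ∀ i, 0 ≤ aσ i)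
    (ha : (-(Matrix.fromBlocks
        (Matrix.fromBlocks (-E_R) (E_R * (A - Bu * K)) ((A - Bu * K)ᵀ * E_R) (-(aα • E_R)))
        (Matrix.fromRows (E_R * Bw) 0)
        (Matrix.fromCols (Bwᵀ * E_R) 0)
        (-(Matrix.blockDiagonal' fun i => aσ i • E_W i)))).PosSemidef)
    (hb : aα + ∑ i, aσ i ≤ 1)
    (hc : ∀ i, (E_R - (Cb i)ᵀ * Cb i).PosSemidef) :
    ∀ σ : ℝ, 0 ≤ σ →
      ({x | x ⬝ᵥ E_R.mulVec x ≤ σ ^ 2} ⊆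
          {x | ∀ i, x ⬝ᵥ ((Cb i)ᵀ * Cb i).mulVec x ≤ σ ^ 2}) ∧
      ((A - Bu * K).mulVec '' {x | x ⬝ᵥ E_R.mulVec x ≤ σ ^ 2} +
          Bw.mulVec ''
            {w | ∀ i, vecBlock w i ⬝ᵥ (E_W i).mulVec (vecBlock w i) ≤ σ ^ 2} ⊆
        {x | x ⬝ᵥ E_R.mulVec x ≤ σ ^ 2}) := by
  intro σ hσ
  have hσ2 : (0:ℝ) ≤ σ ^ 2 := sq_nonneg σ
  constructor
  · intro x hx i
    have h := (hc i).dotProduct_mulVec_nonneg x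
    simp only [star_trivial, Matrix.sub_mulVec, dotProduct_sub] at h
    simp only [Set.mem_setOf_eq] at hx ⊢
    linarith
  · intro y hy
    rw [Set.mem_add] at hy
    obtain ⟨xp1, ⟨x, hx, rfl⟩, wp1, ⟨w, hw, rfl⟩, rfl⟩ := hy
    simp only [Set.mem_setOf_eq] at hx hw ⊢
    set Ab := A - Bu * K with hAb
    set xp := Ab.mulVec x + Bw.mulVec w with hxp
    have key := ha.dotProduct_mulVec_nonneg (Sum.elim (Sum.elim xp x) w)
    simp only [Matrix.neg_mulVec, dotProduct_neg, Matrix.fromBlocks_mulVec,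
      Sum.elim_comp_inl, Sum.elim_comp_inr, Matrix.fromRows_mulVec,
      Matrix.fromCols_mulVec_sumElim, sumElim_dotProduct_sumElim,
      star_trivial, Matrix.mulVec_add, dotProduct_add, add_dotProduct,
      ← Matrix.mulVec_mulVec, Matrix.vecMul_transpose, Matrix.dotProduct_mulVec,
      Matrix.zero_mulVec, Matrix.smul_mulVec, dotProduct_smul,
      dotProduct_zero, add_zero, neg_neg, le_neg, neg_zero] at key
    simp only [← Matrix.dotProduct_mulVec] at key
    have e1 : xp ⬝ᵥ E_R.mulVec (Ab.mulVec x) + xp ⬝ᵥ E_R.mulVec (Bw.mulVec w)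
        = xp ⬝ᵥ E_R.mulVec xp := by
      rw [← dotProduct_add, ← Matrix.mulVec_add, ← hxp]
    have e2 : (Ab.mulVec x) ⬝ᵥ E_R.mulVec xp + (Bw.mulVec w) ⬝ᵥ E_R.mulVec xp
        = xp ⬝ᵥ E_R.mulVec xp := by
      rw [← add_dotProduct, ← hxp]
    have e3 : w ⬝ᵥ (Matrix.blockDiagonal' fun i => aσ i • E_W i).mulVec w
        = ∑ i, aσ i * (vecBlock w i ⬝ᵥ (E_W i).mulVec (vecBlock w i)) := by
      rw [quadBD]
      refine Finset.sum_congr rfl fun i _ => ?_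
      rw [Matrix.smul_mulVec, dotProduct_smul, smul_eq_mul]
    have hsum : ∑ i, aσ i * (vecBlock w i ⬝ᵥ (E_W i).mulVec (vecBlock w i))
        ≤ ∑ i, aσ i * σ ^ 2 := by
      refine Finset.sum_le_sum fun i _ => ?_
      exact mul_le_mul_of_nonneg_left (hw i) (haσ i)
    have haασ : aα * (x ⬝ᵥ E_R.mulVec x) ≤ aα * σ ^ 2 :=
      mul_le_mul_of_nonneg_left hx haα
    have hfin : xp ⬝ᵥ E_R.mulVec xp ≤ (aα + ∑ i, aσ i) * σ ^ 2 := by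
      rw [add_mul, Finset.sum_mul]
      have := key
      simp only [smul_eq_mul] at this
      nlinarith [e1, e2, e3, hsum, haασ]
    calc xp ⬝ᵥ E_R.mulVec xp ≤ (aα + ∑ i, aσ i) * σ ^ 2 := hfin
      _ ≤ 1 * σ ^ 2 := mul_le_mul_of_nonneg_right hb hσ2
      _ = σ ^ 2 := one_mul _
end

section
/- Let K, K_R ∈ ℝ^{n_u×n_x}, let E_R ∈ ℝ^{n_x×n_x} be symmetric positive definite, and set H̄ = H_x − H_u K and H̄_R = H_x − H_u K_R, with i-th rows H̄_i, (H̄_R)_i and (H_u)_i. Let z ∈ ℝ^{n_x}, ν ∈ ℝ^{n_u}, α ≥ 0 satisfy, for every i ∈ {1,…,n_c}, H̄_i z + (H_u)_i ν + ‖(H̄_R)_i E_R^{-1/2}‖₂ · α ≤ g_i. Then for every e ∈ ℝ^{n_x} with eᵀ E_R e ≤ α², the state x = z + e and control u = −K z + ν − K_R e satisfy H_x x + H_u u ≤ g componentwise, i.e., (x,u) ∈ ℂ. -/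
open Matrix Set Pointwise Filter Topology

/-- robustified linear constraints: if the tightened constraints hold for
`(z, ν, α)`, then the true state/input pair `x = z + e`, `u = −Kz + ν − K_R e`
satisfies `H_x x + H_u u ≤ g` for every `e` in the ellipsoid. `S` is the symmetric
positive definite square root of `E_R`. -/
theorem stmt14 {nx nu nc : ℕ}
    (Hx : Matrix (Fin nc) (Fin nx) ℝ) (Hu : Matrix (Fin nc) (Fin nu) ℝ) (g : Fin nc → ℝ)
    (K K_R : Matrix (Fin nu) (Fin nx) ℝ)
    (E_R : Matrix (Fin nx) (Fin nx) ℝ) (hER : E_R.PosDef)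
    (S : Matrix (Fin nx) (Fin nx) ℝ) (hS : S.PosDef) (hSS : S * S = E_R)
    (z : Fin nx → ℝ) (ν : Fin nu → ℝ) (α : ℝ) (hα : 0 ≤ α)
    (hcon : ∀ i, ((Hx - Hu * K).mulVec z) i + (Hu.mulVec ν) i +
        vnorm (((Hx - Hu * K_R) * S⁻¹) i) * α ≤ g i) :
    ∀ e : Fin nx → ℝ, e ⬝ᵥ E_R.mulVec e ≤ α ^ 2 →
      ∀ i, (Hx.mulVec (z + e)) i +
          (Hu.mulVec (-(K.mulVec z) + ν - K_R.mulVec e)) i ≤ g i := by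
  intro e he i
  set M := Hx - Hu * K_R with hM
  have hSdet : IsUnit S.det := isUnit_iff_ne_zero.mpr (ne_of_gt hS.det_pos)
  have hinv : S⁻¹ * S = 1 := Matrix.nonsing_inv_mul S hSdet
  have hSsym : Sᵀ = S := hS.isHermitian
  -- ‖S e‖ ≤ α
  have hSe : (S.mulVec e) ⬝ᵥ (S.mulVec e) = e ⬝ᵥ E_R.mulVec e := by
    nth_rewrite 1 [show S.mulVec e = Sᵀ.mulVec e from by rw [hSsym]]
    rw [← Matrix.vecMul_transpose, ← Matrix.dotProduct_mulVec, transpose_transpose,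
      Matrix.mulVec_mulVec, hSS]
  have hsum : ∑ j, (S.mulVec e) j ^ 2 ≤ α ^ 2 := by
    calc ∑ j, (S.mulVec e) j ^ 2 = (S.mulVec e) ⬝ᵥ (S.mulVec e) := by
          simp [dotProduct, sq]
      _ ≤ α ^ 2 := hSe ▸ he
  have hnormSe : vnorm (S.mulVec e) ≤ α := by
    rw [vnorm, show α = Real.sqrt (α ^ 2) from (Real.sqrt_sq hα).symm]
    exact Real.sqrt_le_sqrt hsum
  -- row bound
  have hrow : (M.mulVec e) i ≤ vnorm ((M * S⁻¹) i) * α := by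
    have h1 : (M.mulVec e) i = ∑ j, (M * S⁻¹) i j * (S.mulVec e) j := by
      have : ((M * S⁻¹).mulVec (S.mulVec e)) i = (M.mulVec e) i := by
        rw [Matrix.mulVec_mulVec, Matrix.mul_assoc, hinv, Matrix.mul_one]
      rw [← this]; rfl
    rw [h1]
    have hcs := Finset.sum_mul_sq_le_sq_mul_sq Finset.univ (fun j => (M * S⁻¹) i j)
      (fun j => (S.mulVec e) j)
    have h2 : ∑ j, (M * S⁻¹) i j * (S.mulVec e) j ≤
        vnorm ((M * S⁻¹) i) * vnorm (S.mulVec e) := by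
      have := Real.sqrt_le_sqrt hcs
      rw [Real.sqrt_mul (by positivity)] at this
      calc ∑ j, (M * S⁻¹) i j * (S.mulVec e) j
          ≤ |∑ j, (M * S⁻¹) i j * (S.mulVec e) j| := le_abs_self _
        _ = Real.sqrt ((∑ j, (M * S⁻¹) i j * (S.mulVec e) j) ^ 2) := (Real.sqrt_sq_eq_abs _).symm
        _ ≤ _ := this
    exact h2.trans (by
      have := mul_le_mul_of_nonneg_left hnormSe (Real.sqrt_nonneg _ : (0:ℝ) ≤ vnorm ((M * S⁻¹) i))
      exact this)
  have hlhs : (Hx.mulVec (z + e)) i + (Hu.mulVec (-(K.mulVec z) + ν - K_R.mulVec e)) i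
      = ((Hx - Hu * K).mulVec z) i + (Hu.mulVec ν) i + (M.mulVec e) i := by
    simp [hM, Matrix.mulVec_add, Matrix.mulVec_sub, Matrix.sub_mulVec, Matrix.mulVec_neg,
      ← Matrix.mulVec_mulVec]
    ring
  rw [hlhs]
  have := hcon i
  linarith [mul_le_mul_of_nonneg_right (le_refl (vnorm (((Hx - Hu * K_R) * S⁻¹) i))) hα, hrow]
end

section
/- Let K, K_R ∈ ℝ^{n_u×n_x}, E_R ∈ ℝ^{n_x×n_x} symmetric positive definite, E_N ∈ ℝ^{n_x×n_x} symmetric positive definite, and set Ā = A − B^u K, Ā_R = A − B^u K_R, C̄ = C_y − D_y^u K, C̄_R = C_y − D_y^u K_R, H̄ = H_x − H_u K, H̄_R = H_x − H_u K_R. Let a_α ≥ 0 and a_{σ,1},…,a_{σ,s} ≥ 0 be such that for all α, α' ≥ 0 and σ ∈ ℝ^s ≥ 0 with α'² ≥ a_α α² + Σ_i a_{σ,i} σ_i², one has Ā_R·R(α) + B^w·W(σ) ⊆ R(α'), where R(α) = {e : eᵀ E_R e ≤ α²} and W(σ) = {w = (w_1,…,w_s) : ‖w_i‖₂ ≤ σ_i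 for all i}. Suppose sequences (z_k)_{k=0}^N, (ν_k)_{k=0}^{N−1}, (α_k)_{k=0}^N ≥ 0, (σ_k)_{k=0}^{N−1} ∈ ℝ^s ≥ 0 satisfy: (1) z_{k+1} = Ā z_k + B^u ν_k; (2) α_{k+1}² ≥ a_α α_k² + Σ_i a_{σ,i}(σ_k)_i²; (3) for each i, (σ_k)_i ≥ ‖C̄_i z_k + (D_y^u)_i ν_k‖₂ + ‖(C̄_R)_i E_R^{-1/2}‖₂ α_k; (4) for each row j, H̄_j z_k + (H_u)_j ν_k + ‖(H̄_R)_j E_R^{-1/2}‖₂ α_k ≤ g_j; (5) ‖E_N^{1/2} z_N‖₂ + ‖E_N^{1/2} E_R^{-1/2}‖₂ α_N ≤ 1. Let x_0 = z_0 + e_0 with e_0ᵀ E_R e_0 ≤ α_0², and generate the true trajectory by x_{k+1} = A x_k + B^u u_k + B^w w_k with u_k = −K z_k + ν_k − K_R e_k, e_k = x_k − z_k, and w_k = Δ_k (C_y x_k + D_y^u u_k) for arbitrary Δ_k ∈ 𝔻. Then for every k < N, (x_k, u_k) satisfies H_x x_k + H_u u_k ≤ g, for every k ≤ N one has e_kᵀ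 E_R e_k ≤ α_k², and the terminal state satisfies x_Nᵀ E_N x_N ≤ 1. -/
open Matrix Set Pointwise Filter Topology

open scoped RealInnerProductSpace

set_option linter.unusedSectionVars false

section helpers
variable {n m : Type*} [Fintype n] [Fintype m]

noncomputable def toE (v : n → ℝ) : EuclideanSpace ℝ n := (WithLp.equiv 2 (n → ℝ)).symm v

lemma vnorm_eq (v : n → ℝ) : vnorm v = ‖toE v‖ := by
  rw [EuclideanSpace.norm_eq]
  simp [vnorm, toE, Real.norm_eq_abs, sq_abs]

lemma vnorm_nonneg (v : n → ℝ) : 0 ≤ vnorm v := Real.sqrt_nonneg _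

lemma vnorm_add_le (a b : n → ℝ) : vnorm (a + b) ≤ vnorm a + vnorm b := by
  simp only [vnorm_eq]; exact norm_add_le _ _

lemma vnorm_smul (c : ℝ) (a : n → ℝ) : vnorm (c • a) = |c| * vnorm a := by
  simp only [vnorm_eq]
  rw [show toE (c • a) = c • toE a from rfl, norm_smul]; simp

lemma vnorm_sq (v : n → ℝ) : vnorm v ^ 2 = ∑ i, v i ^ 2 :=
  Real.sq_sqrt (Finset.sum_nonneg fun _ _ => sq_nonneg _)

lemma vnorm_eq_zero {v : n → ℝ} (h : vnorm v = 0) : v = 0 := by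
  rw [vnorm_eq] at h
  have := norm_eq_zero.mp h
  funext i
  exact congrFun (congrArg (WithLp.equiv 2 (n → ℝ)) this) i

lemma abs_dotProduct_le (a b : n → ℝ) : |a ⬝ᵥ b| ≤ vnorm a * vnorm b := by
  have h : a ⬝ᵥ b = ⟪toE a, toE b⟫ := by
    simp [dotProduct, toE, PiLp.inner_apply, RCLike.inner_apply, conj_trivial, mul_comm]
  rw [h, vnorm_eq, vnorm_eq]
  exact abs_real_inner_le_norm _ _

lemma dotProduct_le (a b : n → ℝ) : a ⬝ᵥ b ≤ vnorm a * vnorm b :=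
  le_trans (le_abs_self _) (abs_dotProduct_le a b)

lemma frob_bound (M : Matrix m n ℝ) {v : n → ℝ} (hv : vnorm v ≤ 1) :
    vnorm (M.mulVec v) ≤ Real.sqrt (∑ j, ∑ l, M j l ^ 2) := by
  rw [vnorm]
  apply Real.sqrt_le_sqrt
  apply Finset.sum_le_sum
  intro j _
  have h2 : |M j ⬝ᵥ v| ≤ vnorm (M j) * vnorm v := abs_dotProduct_le _ _
  have h3 : vnorm (M j) * vnorm v ≤ vnorm (M j) := by
    nlinarith [vnorm_nonneg (M j), vnorm_nonneg v]
  have h4 : (M.mulVec v j) ^ 2 ≤ vnorm (M j) ^ 2 := by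
    rw [← sq_abs]
    exact pow_le_pow_left₀ (abs_nonneg _) (le_trans h2 h3) 2
  calc (M.mulVec v j) ^ 2 ≤ vnorm (M j) ^ 2 := h4
    _ = ∑ l, M j l ^ 2 := vnorm_sq _

lemma sNorm_bddAbove (M : Matrix m n ℝ) :
    BddAbove ((fun v => vnorm (M.mulVec v)) '' {v | vnorm v ≤ 1}) := by
  refine ⟨Real.sqrt (∑ j, ∑ l, M j l ^ 2), ?_⟩
  rintro x ⟨v, hv, rfl⟩
  exact frob_bound M hv

lemma le_sNorm (M : Matrix m n ℝ) {v : n → ℝ} (hv : vnorm v ≤ 1) :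
    vnorm (M.mulVec v) ≤ sNorm M :=
  le_csSup (sNorm_bddAbove M) ⟨v, hv, rfl⟩

lemma sNorm_nonneg (M : Matrix m n ℝ) : 0 ≤ sNorm M := by
  have h : vnorm (M.mulVec (0 : n → ℝ)) ≤ sNorm M :=
    le_sNorm M (by simp [vnorm])
  simpa [Matrix.mulVec_zero, vnorm] using h

lemma vnorm_mulVec_le (M : Matrix m n ℝ) (v : n → ℝ) :
    vnorm (M.mulVec v) ≤ sNorm M * vnorm v := by
  rcases eq_or_lt_of_le (vnorm_nonneg v) with h | h
  · have hv : v = 0 := vnorm_eq_zero h.symm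
    simp [hv, Matrix.mulVec_zero, vnorm]
  · have h1 : vnorm ((vnorm v)⁻¹ • v) = 1 := by
      rw [vnorm_smul, abs_of_pos (inv_pos.mpr h), inv_mul_cancel₀ h.ne']
    have h2 := le_sNorm M (le_of_eq h1)
    rw [Matrix.mulVec_smul, vnorm_smul, abs_of_pos (inv_pos.mpr h)] at h2
    have h3 : vnorm (M.mulVec v) = ((vnorm v)⁻¹ * vnorm (M.mulVec v)) * vnorm v := by
      field_simp
    rw [h3]
    exact mul_le_mul_of_nonneg_right h2 (le_of_lt h)
end helpers


lemma blockDiagonal'_mulVec_block {s : ℕ} {np nq : Fin s → ℕ}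
    (B : ∀ i, Matrix (Fin (np i)) (Fin (nq i)) ℝ) (v : (Σ i, Fin (nq i)) → ℝ) (i : Fin s) :
    vecBlock ((Matrix.blockDiagonal' B).mulVec v) i = (B i).mulVec (vecBlock v i) := by
  funext j
  show ∑ p : Σ i', Fin (nq i'), Matrix.blockDiagonal' B ⟨i, j⟩ p * v p = _
  rw [← Finset.univ_sigma_univ, Finset.sum_sigma]
  rw [Finset.sum_eq_single i]
  · simp [Matrix.blockDiagonal'_apply, Matrix.mulVec, dotProduct, vecBlock]
  · intro b _ hb
    simp [Matrix.blockDiagonal'_apply, hb.symm]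
  · simp

lemma quad_eq {nx : ℕ} (S E : Matrix (Fin nx) (Fin nx) ℝ) (hsym : Sᵀ = S)
    (hSS : S * S = E) (v : Fin nx → ℝ) :
    v ⬝ᵥ E.mulVec v = vnorm (S.mulVec v) ^ 2 := by
  rw [← hSS, ← Matrix.mulVec_mulVec, Matrix.dotProduct_mulVec]
  nth_rewrite 1 [← hsym]
  rw [Matrix.vecMul_transpose, vnorm_sq]
  simp [dotProduct, sq]

/-- the T-GCMPC feasibility theorem: a feasible solution of the SOCP
tube optimization keeps the true uncertain trajectory feasible, keeps the error in the
tube, and steers the terminal state into the terminal ellipsoid. `S` and `SN` are the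
symmetric positive definite square roots of `E_R` and `E_N` respectively. -/
theorem stmt15 {nx nu nc s : ℕ} {np nq : Fin s → ℕ}
    (A : Matrix (Fin nx) (Fin nx) ℝ) (Bu : Matrix (Fin nx) (Fin nu) ℝ)
    (Bw : Matrix (Fin nx) (Σ i, Fin (np i)) ℝ)
    (Cy : Matrix (Σ i, Fin (nq i)) (Fin nx) ℝ)
    (Dyu : Matrix (Σ i, Fin (nq i)) (Fin nu) ℝ)
    (Hx : Matrix (Fin nc) (Fin nx) ℝ) (Hu : Matrix (Fin nc) (Fin nu) ℝ) (g : Fin nc → ℝ)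
    (K K_R : Matrix (Fin nu) (Fin nx) ℝ)
    (E_R : Matrix (Fin nx) (Fin nx) ℝ) (hER : E_R.PosDef)
    (S : Matrix (Fin nx) (Fin nx) ℝ) (hS : S.PosDef) (hSS : S * S = E_R)
    (E_N : Matrix (Fin nx) (Fin nx) ℝ) (hEN : E_N.PosDef)
    (SN : Matrix (Fin nx) (Fin nx) ℝ) (hSN : SN.PosDef) (hSNSN : SN * SN = E_N)
    (aα : ℝ) (aσ : Fin s → ℝ) (haα : 0 ≤ aα) (haσ : ∀ i, 0 ≤ aσ i)
    -- the RPI level-set property of the family `R(α)`, `W(σ)`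
    (hRPI : ∀ (a : ℝ) (σ' : Fin s → ℝ) (a' : ℝ), 0 ≤ a → (∀ i, 0 ≤ σ' i) → 0 ≤ a' →
      aα * a ^ 2 + ∑ i, aσ i * σ' i ^ 2 ≤ a' ^ 2 →
      (A - Bu * K_R).mulVec '' {e | e ⬝ᵥ E_R.mulVec e ≤ a ^ 2} +
          Bw.mulVec '' {w | ∀ i, vnorm (vecBlock w i) ≤ σ' i} ⊆
        {e | e ⬝ᵥ E_R.mulVec e ≤ a' ^ 2})
    (N : ℕ)
    (z : ℕ → Fin nx → ℝ) (ν : ℕ → Fin nu → ℝ) (α : ℕ → ℝ) (σ : ℕ → Fin s → ℝ)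
    (hαnn : ∀ k, 0 ≤ α k) (hσnn : ∀ k i, 0 ≤ σ k i)
    -- (1) nominal dynamics
    (h1 : ∀ k < N, z (k + 1) = (A - Bu * K).mulVec (z k) + Bu.mulVec (ν k))
    -- (2) tube-scaling dynamics
    (h2 : ∀ k < N, aα * α k ^ 2 + ∑ i, aσ i * σ k i ^ 2 ≤ α (k + 1) ^ 2)
    -- (3) uncertainty-channel bounds
    (h3 : ∀ k < N, ∀ i,
      vnorm (vecBlock ((Cy - Dyu * K).mulVec (z k) + Dyu.mulVec (ν k)) i) +
        sNorm (rowBlock (Cy - Dyu * K_R) i * S⁻¹) * α k ≤ σ k i)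
    -- (4) tightened state/input constraints
    (h4 : ∀ k < N, ∀ j,
      ((Hx - Hu * K).mulVec (z k)) j + (Hu.mulVec (ν k)) j +
        vnorm (((Hx - Hu * K_R) * S⁻¹) j) * α k ≤ g j)
    -- (5) terminal condition
    (h5 : vnorm (SN.mulVec (z N)) + sNorm (SN * S⁻¹) * α N ≤ 1)
    -- the true uncertain trajectory
    (x : ℕ → Fin nx → ℝ) (e : ℕ → Fin nx → ℝ) (u : ℕ → Fin nu → ℝ)
    (w : ℕ → (Σ i, Fin (np i)) → ℝ)
    (Δseq : ℕ → Matrix (Σ i, Fin (np i)) (Σ i, Fin (nq i)) ℝ)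
    (hΔ : ∀ k, memD (Δseq k))
    (he : ∀ k, e k = x k - z k)
    (hu : ∀ k, u k = -(K.mulVec (z k)) + ν k - K_R.mulVec (e k))
    (hw : ∀ k, w k = (Δseq k).mulVec (Cy.mulVec (x k) + Dyu.mulVec (u k)))
    (he0 : e 0 ⬝ᵥ E_R.mulVec (e 0) ≤ α 0 ^ 2)
    (hdyn : ∀ k < N, x (k + 1) =
      A.mulVec (x k) + Bu.mulVec (u k) + Bw.mulVec (w k)) :
    (∀ k < N, ∀ j, (Hx.mulVec (x k)) j + (Hu.mulVec (u k)) j ≤ g j) ∧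
    (∀ k ≤ N, e k ⬝ᵥ E_R.mulVec (e k) ≤ α k ^ 2) ∧
    x N ⬝ᵥ E_N.mulVec (x N) ≤ 1 := by
  have hSsymm : Sᵀ = S := by
    rw [← Matrix.conjTranspose_eq_transpose_of_trivial]; exact hS.1
  have hSNsymm : SNᵀ = SN := by
    rw [← Matrix.conjTranspose_eq_transpose_of_trivial]; exact hSN.1
  have hSdet : IsUnit S.det := hS.det_pos.ne'.isUnit
  have hSinv : ∀ v : Fin nx → ℝ, S⁻¹.mulVec (S.mulVec v) = v := by
    intro v
    rw [Matrix.mulVec_mulVec, Matrix.nonsing_inv_mul _ hSdet, Matrix.one_mulVec]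
  have quadR := quad_eq S E_R hSsymm hSS
  have quadN := quad_eq SN E_N hSNsymm hSNSN
  have normR : ∀ (v : Fin nx → ℝ) (a : ℝ), 0 ≤ a → v ⬝ᵥ E_R.mulVec v ≤ a ^ 2 →
      vnorm (S.mulVec v) ≤ a := by
    intro v a ha h
    rw [quadR] at h
    nlinarith [vnorm_nonneg (S.mulVec v)]
  have hxze : ∀ k, x k = z k + e k := by
    intro k; rw [he k]; abel
  -- the tube invariant
  have key : ∀ k, k ≤ N → e k ⬝ᵥ E_R.mulVec (e k) ≤ α k ^ 2 := by
    intro k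
    induction k with
    | zero => intro _; exact he0
    | succ k ih =>
      intro hk1
      have hk : k < N := hk1
      have ek_bound := ih (le_of_lt hk)
      have hSek : vnorm (S.mulVec (e k)) ≤ α k := normR _ _ (hαnn k) ek_bound
      have hq : Cy.mulVec (x k) + Dyu.mulVec (u k) =
          ((Cy - Dyu * K).mulVec (z k) + Dyu.mulVec (ν k)) +
            (Cy - Dyu * K_R).mulVec (e k) := by
        rw [hu k, hxze k]
        simp only [Matrix.sub_mulVec, Matrix.mulVec_add, Matrix.mulVec_sub,
          Matrix.mulVec_neg, ← Matrix.mulVec_mulVec]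
        abel
      have hwb : ∀ i, vnorm (vecBlock (w k) i) ≤ σ k i := by
        intro i
        obtain ⟨Bk, hBk, hΔeq⟩ := hΔ k
        have h1' : vecBlock (w k) i =
            (Bk i).mulVec (vecBlock (Cy.mulVec (x k) + Dyu.mulVec (u k)) i) := by
          rw [hw k, hΔeq, blockDiagonal'_mulVec_block]
        rw [h1']
        refine le_trans (hBk i _) ?_
        rw [hq]
        have hsplit : vecBlock (((Cy - Dyu * K).mulVec (z k) + Dyu.mulVec (ν k)) +
              (Cy - Dyu * K_R).mulVec (e k)) i =
            vecBlock ((Cy - Dyu * K).mulVec (z k) + Dyu.mulVec (ν k)) i +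
              vecBlock ((Cy - Dyu * K_R).mulVec (e k)) i := rfl
        rw [hsplit]
        refine le_trans (vnorm_add_le _ _) (le_trans ?_ (h3 k hk i))
        refine add_le_add_right ?_ _
        have h2' : vecBlock ((Cy - Dyu * K_R).mulVec (e k)) i =
            (rowBlock (Cy - Dyu * K_R) i * S⁻¹).mulVec (S.mulVec (e k)) := by
          have hrb : vecBlock ((Cy - Dyu * K_R).mulVec (e k)) i =
              (rowBlock (Cy - Dyu * K_R) i).mulVec (e k) := rfl
          conv_lhs => rw [hrb, ← hSinv (e k)]
          rw [Matrix.mulVec_mulVec]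
        rw [h2']
        refine le_trans (vnorm_mulVec_le _ _) ?_
        exact mul_le_mul_of_nonneg_left hSek (sNorm_nonneg _)
      have he_rec : e (k + 1) = (A - Bu * K_R).mulVec (e k) + Bw.mulVec (w k) := by
        rw [he (k + 1), hdyn k hk, h1 k hk, hu k, he k]
        simp only [Matrix.sub_mulVec, Matrix.mulVec_add, Matrix.mulVec_sub,
          Matrix.mulVec_neg, ← Matrix.mulVec_mulVec]
        abel
      refine hRPI (α k) (σ k) (α (k + 1)) (hαnn k) (hσnn k) (hαnn (k + 1)) (h2 k hk) ?_
      rw [he_rec]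
      exact Set.add_mem_add ⟨e k, ek_bound, rfl⟩ ⟨w k, hwb, rfl⟩
  refine ⟨?_, key, ?_⟩
  · -- constraints
    intro k hk j
    have ek_bound := key k (le_of_lt hk)
    have hSek : vnorm (S.mulVec (e k)) ≤ α k := normR _ _ (hαnn k) ek_bound
    have hHx : Hx.mulVec (x k) j + Hu.mulVec (u k) j =
        ((Hx - Hu * K).mulVec (z k)) j + (Hu.mulVec (ν k)) j +
          ((Hx - Hu * K_R).mulVec (e k)) j := by
      rw [hu k, hxze k]
      simp only [Matrix.sub_mulVec, Matrix.mulVec_add, Matrix.mulVec_sub,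
        Matrix.mulVec_neg, ← Matrix.mulVec_mulVec, Pi.add_apply, Pi.sub_apply,
        Pi.neg_apply]
      ring
    rw [hHx]
    have hrow : ((Hx - Hu * K_R).mulVec (e k)) j =
        ((Hx - Hu * K_R) * S⁻¹) j ⬝ᵥ (S.mulVec (e k)) := by
      conv_lhs => rw [← hSinv (e k), Matrix.mulVec_mulVec]
      rfl
    have hbd : ((Hx - Hu * K_R).mulVec (e k)) j ≤
        vnorm (((Hx - Hu * K_R) * S⁻¹) j) * α k := by
      rw [hrow]
      refine le_trans (dotProduct_le _ _) ?_
      exact mul_le_mul_of_nonneg_left hSek (vnorm_nonneg _)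
    have := h4 k hk j
    linarith
  · -- terminal
    have eN := key N le_rfl
    have hSeN : vnorm (S.mulVec (e N)) ≤ α N := normR _ _ (hαnn N) eN
    have hxN : SN.mulVec (x N) = SN.mulVec (z N) + SN.mulVec (e N) := by
      rw [hxze N, Matrix.mulVec_add]
    have hterm : vnorm (SN.mulVec (x N)) ≤ 1 := by
      rw [hxN]
      refine le_trans (vnorm_add_le _ _) (le_trans ?_ h5)
      refine add_le_add_right ?_ _
      have h2' : SN.mulVec (e N) = (SN * S⁻¹).mulVec (S.mulVec (e N)) := by
        conv_lhs => rw [← hSinv (e N), Matrix.mulVec_mulVec]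
      rw [h2']
      refine le_trans (vnorm_mulVec_le _ _) ?_
      exact mul_le_mul_of_nonneg_left hSeN (sNorm_nonneg _)
    rw [quadN (x N)]
    nlinarith [vnorm_nonneg (SN.mulVec (x N))]
end
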